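/- Let r = [a_0; a_1, …, a_n] be a Landess (σ,k)-permutiple and let s = [b_0; b_1, …, b_m] be a Landess (τ,k)-permutiple (same multiplier k). Define the permutation π of {0, 1, …, n+m+1} by π(j) = σ(j) for 0 ≤ j ≤ n and π(n+1+j) = n+1+τ(j) for 0 ≤ j ≤ m. Then the concatenation r ∘ s = [a_0; a_1, …, a_n, b_0, b_1, …, b_m] is a Landess (π,k)-permutiple. -/

import Mathlib

/-- Value of the finite simple continued fraction `[x₀; x₁, …, xₙ]`. -/
def cfv : List ℚ → ℚ
  | [] => 0
  | [x] => x
  | x :: y :: t => x + 1 / cfv (y :: t)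

/-- The continuant `K(x₀, …, xₙ)`: `K() = 1`, `K(x₀) = x₀`, and the usual
three-term recurrence. -/
def cont : List ℕ → ℕ
  | [] => 1
  | [x] => x
  | x :: y :: t => x * cont (y :: t) + cont t

/-- The digit string of `a`, as a list of rationals. -/
def digitsQ {N : ℕ} (a : Fin N → ℕ) : List ℚ := (List.ofFn a).map (fun x => (x : ℚ))

/-- `[a₀; a₁, …, aₙ]` (canonical: positive digits, last digit ≥ 2) is a
`(σ,k)`-permutiple: it equals `k` times the continued fraction of the permuted digits. -/
def IsPermutiple {n : ℕ} (a : Fin (n+1) → ℕ) (σ : Equiv.Perm (Fin (n+1))) (k : ℕ) : Prop :=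
  (∀ j, 0 < a j) ∧ 2 ≤ a (Fin.last n) ∧ 1 < k ∧
    cfv (digitsQ a) = k * cfv (digitsQ (a ∘ σ))

/-- A `(σ,k)`-permutiple is continuant-preserving if
`K(a₀,…,aₙ) = K(a_{σ(0)},…,a_{σ(n)})`. -/
def ContinuantPreserving {n : ℕ} (a : Fin (n+1) → ℕ) (σ : Equiv.Perm (Fin (n+1))) : Prop :=
  cont (List.ofFn a) = cont (List.ofFn (a ∘ σ))

/-- A `(σ,k)`-permutiple is perfect if `a_j = k·a_{σ(j)}` for even `j` and
`a_{σ(j)} = k·a_j` for odd `j`. -/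
def IsPerfect {n : ℕ} (a : Fin (n+1) → ℕ) (σ : Equiv.Perm (Fin (n+1))) (k : ℕ) : Prop :=
  ∀ j : Fin (n+1), (Even (j : ℕ) → a j = k * a (σ j)) ∧ (Odd (j : ℕ) → a (σ j) = k * a j)

/-- A `(σ,k)`-permutiple is symmetric if `a_j·a_{n−j} = a_{σ(j)}·a_{σ(n−j)}` for all `j`. -/
def IsSymmetric {n : ℕ} (a : Fin (n+1) → ℕ) (σ : Equiv.Perm (Fin (n+1))) : Prop :=
  ∀ j : Fin (n+1), a j * a j.rev = a (σ j) * a (σ j.rev)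

/-- A Landess permutiple: a continuant-preserving `(σ,k)`-permutiple with
`q_{n−1} = q'_{n−1}` and `p_{n−1} = k·p'_{n−1}`. -/
def IsLandess {n : ℕ} (a : Fin (n+1) → ℕ) (σ : Equiv.Perm (Fin (n+1))) (k : ℕ) : Prop :=
  IsPermutiple a σ k ∧ ContinuantPreserving a σ ∧
    cont ((List.ofFn a).tail.dropLast) = cont ((List.ofFn (a ∘ σ)).tail.dropLast) ∧
    cont ((List.ofFn a).dropLast) = k * cont ((List.ofFn (a ∘ σ)).dropLast)

/-- The concatenation of two Landess permutiples with the same multiplier `k`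
is again a Landess permutiple with multiplier `k`, for the permutation acting as
`σ` on the first block of indices and as `τ` on the second. -/
-- auxiliary lemmas

lemma cont_cons₂ (x y : ℕ) (t : List ℕ) :
    cont (x :: y :: t) = x * cont (y :: t) + cont t := by
  simp [cont]

lemma cont_pos : ∀ l : List ℕ, (∀ x ∈ l, 0 < x) → 0 < cont l
  | [] => fun _ => Nat.one_pos
  | [x] => fun h => h x (by simp)
  | x :: y :: t => fun h => by
      have h1 : 0 < x := h x (by simp)
      have h2 : 0 < cont (y :: t) := cont_pos (y :: t) (fun z hz => h z (by simp [hz]))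
      rw [cont_cons₂]
      exact Nat.add_pos_left (Nat.mul_pos h1 h2) _

def elast : List ℕ → ℕ
  | [] => 0
  | x :: t => cont ((x :: t).dropLast)

lemma elast_ne_nil (l : List ℕ) (h : l ≠ []) : elast l = cont l.dropLast := by
  cases l with
  | nil => exact absurd rfl h
  | cons x t => rfl

lemma elast_cons₂ (x y : ℕ) (t : List ℕ) :
    elast (x :: y :: t) = x * elast (y :: t) + elast t := by
  cases t with
  | nil => simp [elast, cont]
  | cons z t' =>
    cases t' with
    | nil => simp [elast, cont]
    | cons w t'' =>
      show cont (x :: (y :: z :: w :: t'').dropLast) = _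
      rw [show (y :: z :: w :: t'').dropLast = y :: (z :: w :: t'').dropLast from rfl,
        show (z :: w :: t'').dropLast = z :: (w :: t'').dropLast from rfl,
        cont_cons₂]
      rfl

lemma cont_append : ∀ (u v : List ℕ), v ≠ [] →
    cont (u ++ v) = cont u * cont v + elast u * cont v.tail
  | [], v, hv => by simp [cont, elast]
  | [x], v, hv => by
      obtain ⟨y, t, rfl⟩ := List.exists_cons_of_ne_nil hv
      rw [show [x] ++ y :: t = x :: y :: t from rfl, cont_cons₂]
      simp [cont, elast]
  | x :: y :: t, v, hv => by
      have h1 := cont_append (y :: t) v hv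
      have h2 := cont_append t v hv
      rw [show (x :: y :: t) ++ v = x :: ((y :: t) ++ v) from rfl]
      rw [show (y :: t) ++ v = y :: (t ++ v) from rfl, cont_cons₂,
        show y :: (t ++ v) = (y :: t) ++ v from rfl, h1, h2, cont_cons₂, elast_cons₂]
      ring

lemma cfv_eq : ∀ l : List ℕ, l ≠ [] → (∀ x ∈ l, 0 < x) →
    cfv (l.map (fun x => (x : ℚ))) = (cont l : ℚ) / (cont l.tail : ℚ)
  | [], h, _ => absurd rfl h
  | [x], _, _ => by simp [cfv, cont]
  | x :: y :: t, _, h => by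
      have hpos : 0 < cont (y :: t) := cont_pos _ (fun z hz => h z (by simp [hz]))
      have ih := cfv_eq (y :: t) (by simp) (fun z hz => h z (by simp [hz]))
      have hne : (cont (y :: t) : ℚ) ≠ 0 := by exact_mod_cast hpos.ne'
      rw [show (x :: y :: t).map (fun x => (x : ℚ)) =
        (x : ℚ) :: (y : ℚ) :: (t.map (fun x => (x : ℚ))) from rfl]
      rw [show cfv ((x : ℚ) :: (y : ℚ) :: (t.map (fun x => (x : ℚ)))) =
        (x : ℚ) + 1 / cfv ((y : ℚ) :: (t.map (fun x => (x : ℚ)))) from rfl]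
      rw [show (y : ℚ) :: (t.map (fun x => (x : ℚ))) =
        ((y :: t).map (fun x => (x : ℚ))) from rfl, ih, cont_cons₂]
      rw [show (x :: y :: t).tail = y :: t from rfl, show (y :: t).tail = t from rfl]
      field_simp
      norm_cast

theorem stmt17 {n m : ℕ} (a : Fin (n+1) → ℕ) (b : Fin (m+1) → ℕ)
    (σ : Equiv.Perm (Fin (n+1))) (τ : Equiv.Perm (Fin (m+1))) (k : ℕ)
    (hr : IsLandess a σ k) (hs : IsLandess b τ k) :
    IsLandess (n := n+1+m) ((Fin.append a b : Fin ((n+1)+(m+1)) → ℕ))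
      ((finSumFinEquiv.permCongr (Equiv.sumCongr σ τ) : Equiv.Perm (Fin ((n+1)+(m+1))))) k := by
  obtain ⟨⟨hapos, halast, hk, haval⟩, hacp, haq, hap⟩ := hr
  obtain ⟨⟨hbpos, hblast, -, hbval⟩, hbcp, hbq, hbp⟩ := hs
  set π : Equiv.Perm (Fin ((n+1)+(m+1))) :=
    finSumFinEquiv.permCongr (Equiv.sumCongr σ τ) with hπ
  -- abbreviations
  set u : List ℕ := List.ofFn a with hu
  set v : List ℕ := List.ofFn b with hv
  set u' : List ℕ := List.ofFn (a ∘ σ) with hu'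
  set v' : List ℕ := List.ofFn (b ∘ τ) with hv'
  have hul : u.length = n + 1 := by simp [hu]
  have hvl : v.length = m + 1 := by simp [hv]
  have hul' : u'.length = n + 1 := by simp [hu']
  have hvl' : v'.length = m + 1 := by simp [hv']
  have hune : u ≠ [] := by intro h; simp [h] at hul
  have hvne : v ≠ [] := by intro h; simp [h] at hvl
  have hune' : u' ≠ [] := by intro h; simp [h] at hul'
  have hvne' : v' ≠ [] := by intro h; simp [h] at hvl'
  -- n, m ≥ 1
  have hn : 1 ≤ n := by
    by_contra h
    have : u.dropLast = [] := List.eq_nil_of_length_eq_zero (by rw [List.length_dropLast, hul]; omega)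
    have h2 : u'.dropLast = [] := List.eq_nil_of_length_eq_zero (by rw [List.length_dropLast, hul']; omega)
    rw [this, h2] at hap
    simp [cont] at hap
    omega
  have hm : 1 ≤ m := by
    by_contra h
    have : v.dropLast = [] := List.eq_nil_of_length_eq_zero (by rw [List.length_dropLast, hvl]; omega)
    have h2 : v'.dropLast = [] := List.eq_nil_of_length_eq_zero (by rw [List.length_dropLast, hvl']; omega)
    rw [this, h2] at hbp
    simp [cont] at hbp
    omega
  have hutne : u.tail ≠ [] := by
    intro h; have := congrArg List.length h; simp [hul] at this; omega
  have hutne' : u'.tail ≠ [] := by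
    intro h; have := congrArg List.length h; simp [hul'] at this; omega
  have hvdne : v.dropLast ≠ [] := by
    intro h; have := congrArg List.length h; simp [hvl] at this; omega
  have hvdne' : v'.dropLast ≠ [] := by
    intro h; have := congrArg List.length h; simp [hvl'] at this; omega
  -- positivity of entries
  have hupos : ∀ x ∈ u, 0 < x := by
    intro x hx; rw [hu, List.mem_ofFn] at hx; obtain ⟨j, rfl⟩ := hx; exact hapos j
  have hupos' : ∀ x ∈ u', 0 < x := by
    intro x hx; rw [hu', List.mem_ofFn] at hx; obtain ⟨j, rfl⟩ := hx; exact hapos (σ j)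
  have hvpos : ∀ x ∈ v, 0 < x := by
    intro x hx; rw [hv, List.mem_ofFn] at hx; obtain ⟨j, rfl⟩ := hx; exact hbpos j
  have hvpos' : ∀ x ∈ v', 0 < x := by
    intro x hx; rw [hv', List.mem_ofFn] at hx; obtain ⟨j, rfl⟩ := hx; exact hbpos (τ j)
  -- derive tail relations from the value equations
  have hAt : cont u'.tail = k * cont u.tail := by
    have e1 := cfv_eq u hune hupos
    have e2 := cfv_eq u' hune' hupos'
    rw [show digitsQ a = u.map (fun x => (x : ℚ)) from rfl,
      show digitsQ (a ∘ σ) = u'.map (fun x => (x : ℚ)) from rfl, e1, e2, ← hacp] at haval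
    have hA : (0 : ℚ) < cont u := by exact_mod_cast cont_pos u hupos
    have hAt : (0 : ℚ) < cont u.tail := by
      exact_mod_cast cont_pos u.tail (fun x hx => hupos x (List.mem_of_mem_tail hx))
    have hAt' : (0 : ℚ) < cont u'.tail := by
      exact_mod_cast cont_pos u'.tail (fun x hx => hupos' x (List.mem_of_mem_tail hx))
    rw [show ((k : ℚ) * ((cont u : ℚ) / (cont u'.tail : ℚ))) = ((k * cont u : ℚ)) / (cont u'.tail : ℚ) by ring,
      div_eq_div_iff hAt.ne' hAt'.ne'] at haval
    have : (cont u : ℚ) * (cont u'.tail) = (cont u) * (k * cont u.tail) := by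
      linear_combination haval
    have := mul_left_cancel₀ hA.ne' this
    exact_mod_cast this
  have hBt : cont v'.tail = k * cont v.tail := by
    have e1 := cfv_eq v hvne hvpos
    have e2 := cfv_eq v' hvne' hvpos'
    rw [show digitsQ b = v.map (fun x => (x : ℚ)) from rfl,
      show digitsQ (b ∘ τ) = v'.map (fun x => (x : ℚ)) from rfl, e1, e2, ← hbcp] at hbval
    have hB : (0 : ℚ) < cont v := by exact_mod_cast cont_pos v hvpos
    have hBt : (0 : ℚ) < cont v.tail := by
      exact_mod_cast cont_pos v.tail (fun x hx => hvpos x (List.mem_of_mem_tail hx))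
    have hBt' : (0 : ℚ) < cont v'.tail := by
      exact_mod_cast cont_pos v'.tail (fun x hx => hvpos' x (List.mem_of_mem_tail hx))
    rw [show ((k : ℚ) * ((cont v : ℚ) / (cont v'.tail : ℚ))) = ((k * cont v : ℚ)) / (cont v'.tail : ℚ) by ring,
      div_eq_div_iff hBt.ne' hBt'.ne'] at hbval
    have : (cont v : ℚ) * (cont v'.tail) = (cont v) * (k * cont v.tail) := by
      linear_combination hbval
    have := mul_left_cancel₀ hB.ne' this
    exact_mod_cast this
  -- list of the concatenation and its permuted version
  have hcomp : (Fin.append a b) ∘ ⇑π = Fin.append (a ∘ σ) (b ∘ τ) := by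
    funext i
    induction i using Fin.addCases with
    | left j =>
      simp [hπ, Equiv.permCongr_apply, Fin.append_left]
    | right j =>
      simp [hπ, Equiv.permCongr_apply, Fin.append_right]
  have hL : List.ofFn (Fin.append a b) = u ++ v := List.ofFn_fin_append a b
  have hL' : List.ofFn ((Fin.append a b) ∘ ⇑π) = u' ++ v' := by
    rw [hcomp]; exact List.ofFn_fin_append _ _
  -- the four continuant computations
  have hC : cont (u ++ v) = cont (u' ++ v') := by
    rw [cont_append u v hvne, cont_append u' v' hvne',
      elast_ne_nil u hune, elast_ne_nil u' hune', hacp, hbcp, hap, hBt]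
    ring
  have hCt : cont ((u' ++ v').tail) = k * cont ((u ++ v).tail) := by
    rw [List.tail_append_of_ne_nil hune, List.tail_append_of_ne_nil hune',
      cont_append u.tail v hvne, cont_append u'.tail v' hvne',
      elast_ne_nil u.tail hutne, elast_ne_nil u'.tail hutne',
      hAt, hbcp, hBt, haq]
    ring
  have hCq : cont ((u ++ v).tail.dropLast) = cont ((u' ++ v').tail.dropLast) := by
    rw [List.tail_append_of_ne_nil hune, List.tail_append_of_ne_nil hune',
      List.dropLast_append_of_ne_nil hvne, List.dropLast_append_of_ne_nil hvne',
      cont_append u.tail v.dropLast hvdne, cont_append u'.tail v'.dropLast hvdne',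
      elast_ne_nil u.tail hutne, elast_ne_nil u'.tail hutne',
      List.tail_dropLast, List.tail_dropLast,
      hAt, hbp, haq, hbq]
    ring
  have hCp : cont ((u ++ v).dropLast) = k * cont ((u' ++ v').dropLast) := by
    rw [List.dropLast_append_of_ne_nil hvne, List.dropLast_append_of_ne_nil hvne',
      cont_append u v.dropLast hvdne, cont_append u' v'.dropLast hvdne',
      elast_ne_nil u hune, elast_ne_nil u' hune',
      List.tail_dropLast, List.tail_dropLast,
      hacp, hap, hbp, hbq]
    ring
  refine ⟨⟨?_, ?_, hk, ?_⟩, ?_, ?_, ?_⟩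
  · intro j
    refine Fin.addCases (m := n+1) (n := m+1)
      (motive := fun i => 0 < Fin.append a b i) ?_ ?_ j
    · intro i; rw [Fin.append_left]; exact hapos i
    · intro i; rw [Fin.append_right]; exact hbpos i
  · have : Fin.last (n+1+m) = Fin.natAdd (n+1) (Fin.last m) := rfl
    rw [this, Fin.append_right]
    exact hblast
  · show cfv ((List.ofFn (Fin.append a b)).map (fun x => (x : ℚ))) =
      k * cfv ((List.ofFn ((Fin.append a b) ∘ ⇑π)).map (fun x => (x : ℚ)))
    rw [hL, hL', cfv_eq (u ++ v) (by simp [hune]) (by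
        intro x hx; rcases List.mem_append.1 hx with h | h
        · exact hupos x h
        · exact hvpos x h),
      cfv_eq (u' ++ v') (by simp [hune']) (by
        intro x hx; rcases List.mem_append.1 hx with h | h
        · exact hupos' x h
        · exact hvpos' x h), ← hC, hCt]
    have hCtpos : (0:ℚ) < cont ((u ++ v).tail) := by
      exact_mod_cast cont_pos _ (fun x hx => by
        rcases List.mem_append.1 (List.mem_of_mem_tail hx) with h | h
        · exact hupos x h
        · exact hvpos x h)
    have hkne : (k : ℚ) ≠ 0 := Nat.cast_ne_zero.mpr (by omega)
    push_cast
    field_simp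
  · show cont (List.ofFn (Fin.append a b)) = cont (List.ofFn ((Fin.append a b) ∘ ⇑π))
    rw [hL, hL']; exact hC
  · show cont ((List.ofFn (Fin.append a b)).tail.dropLast) =
      cont ((List.ofFn ((Fin.append a b) ∘ ⇑π)).tail.dropLast)
    rw [hL, hL']; exact hCq
  · show cont ((List.ofFn (Fin.append a b)).dropLast) =
      k * cont ((List.ofFn ((Fin.append a b) ∘ ⇑π)).dropLast)
    rw [hL, hL']; exact hCp
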